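/- For every choice of constants n̄, n ∈ ℕ, s̄, s₀ ∈ (0,∞], a, b > 0 and c, c̄ ∈ (0,1) there exists ε ∈ (0,1/8) such that the following holds. Let X be a metric space and K ⊆ X. Suppose that dim_N(K,c̄,s) ≤ n̄ for all 0 < s ≤ s̄, and that there exists r_ε > 0 such that for all x ∈ K, all r ∈ (0, r_ε) and all s ∈ (0, s₀) one has dim_N(B_X(x,r/2), (cas − bε)/(as + bε), r(as + bε)) ≤ n. Then K has linearly controlled dimension at most n: there exist c' > 0 and t₀ > 0 such that dim_N(K,c',t) ≤ n for all 0 < t < t₀. -/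

import Mathlib

open Metric Set ENNReal

/-- The set `A` in a space with distance function `d` has Nagata dimension at most `n`
with constant `c` at scale `s` (written `dim_N(A,c,s) ≤ n` in the paper): there is a
cover `𝒰 = ⋃_{k=0}^n 𝒰 k` of `A` by subsets of `A`, each member having diameter at
most `s`, such that each family `𝒰 k` is `c*s`-separated. -/
def dimNle {X : Type*} (d : X → X → ℝ) (A : Set X) (c s : ℝ) (n : ℕ) : Prop :=
  ∃ 𝒰 : Fin (n + 1) → Set (Set X),
    (∀ k, ∀ U ∈ 𝒰 k, U ⊆ A) ∧
    (∀ p ∈ A, ∃ k, ∃ U ∈ 𝒰 k, p ∈ U) ∧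
    (∀ k, ∀ U ∈ 𝒰 k, ∀ a ∈ U, ∀ b ∈ U, d a b ≤ s) ∧
    (∀ k, ∀ U ∈ 𝒰 k, ∀ V ∈ 𝒰 k, U ≠ V → ∀ a ∈ U, ∀ b ∈ V, c * s ≤ d a b)

/-- `dimAle d A C Rbar β` (written `dim_A(A,C,Rbar) ≤ β` in the paper): for all
`0 < r < R < Rbar` and every `x ∈ A`, the ball of radius `R` around `x` in `A` can be
covered by at most `C * (R/r)^β` balls of radius `r` with centers in `A`. -/
def dimAle {X : Type*} (d : X → X → ℝ) (A : Set X) (C Rbar β : ℝ) : Prop :=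
  ∀ r R : ℝ, 0 < r → r < R → R < Rbar → ∀ x ∈ A,
    ∃ T : Finset X, ↑T ⊆ A ∧ (T.card : ℝ) ≤ C * (R / r) ^ β ∧
      ∀ z ∈ A, d z x < R → ∃ t ∈ T, d z t < r

/-- `d` is a metric distance function on `Y`: symmetric, triangle inequality, and
vanishing exactly on the diagonal. -/
def IsMetricDist {Y : Type*} (d : Y → Y → ℝ) : Prop :=
  (∀ a b, d a b = d b a) ∧ (∀ a b c, d a c ≤ d a b + d b c) ∧ (∀ a b, d a b = 0 ↔ a = b)

/-- An `ε`-coupling between the pointed spaces `(A, dA, a₀)` and `(B, dB, b₀)`: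
a pseudometric on the disjoint union extending `dA` and `dB`, with `d(a₀,b₀) ≤ ε`,
every point of `B_A(a₀,1/ε)` within distance `< ε` of a point of `B`, and every point
of `B_B(b₀,1/ε)` within distance `< ε` of a point of `A`. -/
def IsCoupling {A B : Type*} (dA : A → A → ℝ) (dB : B → B → ℝ) (a₀ : A) (b₀ : B)
    (ε : ℝ) (d : A ⊕ B → A ⊕ B → ℝ) : Prop :=
  (∀ p q, d p q = d q p) ∧
  (∀ p, d p p = 0) ∧
  (∀ p q r, d p r ≤ d p q + d q r) ∧
  (∀ u v : A, d (Sum.inl u) (Sum.inl v) = dA u v) ∧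
  (∀ u v : B, d (Sum.inr u) (Sum.inr v) = dB u v) ∧
  d (Sum.inl a₀) (Sum.inr b₀) ≤ ε ∧
  (∀ u : A, dA u a₀ < 1 / ε → ∃ v : B, d (Sum.inl u) (Sum.inr v) < ε) ∧
  (∀ v : B, dB v b₀ < 1 / ε → ∃ u : A, d (Sum.inl u) (Sum.inr v) < ε)

universe u

lemma absorb_lemma {X : Type*} [MetricSpace X] {K A B : Set X} {n : ℕ}
    (𝒜 ℬ : Fin (n+1) → Set (Set X)) (α β asep bsep δ g : ℝ)
    (hAK : ∀ k, ∀ U ∈ 𝒜 k, U ⊆ K) (hBK : ∀ k, ∀ V ∈ ℬ k, V ⊆ K)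
    (hAcov : ∀ p ∈ A, ∃ k, ∃ U ∈ 𝒜 k, p ∈ U)
    (hBcov : ∀ p ∈ B, ∃ k, ∃ V ∈ ℬ k, p ∈ V)
    (hAdiam : ∀ k, ∀ U ∈ 𝒜 k, ∀ x ∈ U, ∀ y ∈ U, dist x y ≤ α)
    (hBdiam : ∀ k, ∀ V ∈ ℬ k, ∀ x ∈ V, ∀ y ∈ V, dist x y ≤ β)
    (hAsep : ∀ k, ∀ U ∈ 𝒜 k, ∀ U' ∈ 𝒜 k, U ≠ U' → ∀ x ∈ U, ∀ y ∈ U', asep ≤ dist x y)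
    (hBsep : ∀ k, ∀ V ∈ ℬ k, ∀ V' ∈ ℬ k, V ≠ V' → ∀ x ∈ V, ∀ y ∈ V', bsep ≤ dist x y)
    (h1 : 2*δ + β ≤ asep) (hg1 : g ≤ δ) (hg2 : g ≤ bsep)
    (hg3 : g ≤ asep - δ - β) (hα : 0 ≤ α) (hβ : 0 ≤ β) (hδ : 0 ≤ δ) :
    ∃ 𝒞 : Fin (n+1) → Set (Set X),
      (∀ k, ∀ W ∈ 𝒞 k, W ⊆ K) ∧
      (∀ p ∈ A ∪ B, ∃ k, ∃ W ∈ 𝒞 k, p ∈ W) ∧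
      (∀ k, ∀ W ∈ 𝒞 k, ∀ x ∈ W, ∀ y ∈ W, dist x y ≤ α + 2*δ + 2*β) ∧
      (∀ k, ∀ W ∈ 𝒞 k, ∀ W' ∈ 𝒞 k, W ≠ W' → ∀ x ∈ W, ∀ y ∈ W', g ≤ dist x y) := by
  classical
  set Abs : Fin (n+1) → Set X → Set X := fun k U =>
    ⋃₀ {V | V ∈ ℬ k ∧ ∃ v ∈ V, ∃ u ∈ U, dist v u < δ} with hAbsdef
  have hmemAbs : ∀ k U x, x ∈ Abs k U ↔
      ∃ V, (V ∈ ℬ k ∧ ∃ v ∈ V, ∃ u ∈ U, dist v u < δ) ∧ x ∈ V := by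
    intro k U x
    simp [hAbsdef, Set.mem_sUnion]
  have hclose : ∀ k U, ∀ x ∈ U ∪ Abs k U, ∃ u ∈ U, dist x u ≤ δ + β := by
    intro k U x hx
    rcases hx with hx | hx
    · exact ⟨x, hx, by simp [dist_self]; positivity⟩
    · rcases (hmemAbs k U x).1 hx with ⟨V, ⟨hVk, v, hv, u, hu, hvu⟩, hxV⟩
      refine ⟨u, hu, ?_⟩
      have h1 := hBdiam k V hVk x hxV v hv
      have h2 := dist_triangle x v u
      linarith
  refine ⟨fun k => {W | (∃ U ∈ 𝒜 k, W = U ∪ Abs k U) ∨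
      (W ∈ ℬ k ∧ ∀ U ∈ 𝒜 k, ∀ v ∈ W, ∀ u ∈ U, δ ≤ dist v u)}, ?_, ?_, ?_, ?_⟩
  · rintro k W (⟨U, hU, rfl⟩ | ⟨hV, -⟩)
    · rintro x (hx | hx)
      · exact hAK k U hU hx
      · rcases (hmemAbs k U x).1 hx with ⟨V, ⟨hVk, -⟩, hxV⟩
        exact hBK k V hVk hxV
    · exact hBK k W hV
  · rintro p (hp | hp)
    · obtain ⟨k, U, hU, hpU⟩ := hAcov p hp
      exact ⟨k, U ∪ Abs k U, Or.inl ⟨U, hU, rfl⟩, Or.inl hpU⟩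
    · obtain ⟨k, V, hV, hpV⟩ := hBcov p hp
      by_cases h : ∃ U ∈ 𝒜 k, ∃ v ∈ V, ∃ u ∈ U, dist v u < δ
      · obtain ⟨U, hU, habs⟩ := h
        refine ⟨k, U ∪ Abs k U, Or.inl ⟨U, hU, rfl⟩, Or.inr ?_⟩
        exact (hmemAbs k U p).2 ⟨V, ⟨hV, habs⟩, hpV⟩
      · push_neg at h
        refine ⟨k, V, Or.inr ⟨hV, fun U hU v hv u hu => h U hU v hv u hu⟩, hpV⟩
  · rintro k W (⟨U, hU, rfl⟩ | ⟨hV, -⟩) x hx y hy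
    · obtain ⟨ux, hux, hdx⟩ := hclose k U x hx
      obtain ⟨uy, huy, hdy⟩ := hclose k U y hy
      have h1 := hAdiam k U hU ux hux uy huy
      have t1 := dist_triangle x ux y
      have t2 := dist_triangle ux uy y
      have t3 : dist uy y = dist y uy := dist_comm uy y
      linarith
    · have := hBdiam k W hV x hx y hy
      linarith
  · rintro k W hW W' hW' hne x hx y hy
    rcases hW with ⟨U, hU, rfl⟩ | ⟨hVW, hfar⟩
    · rcases hW' with ⟨U', hU', rfl⟩ | ⟨hVW', hfar'⟩
      · have hUU' : U ≠ U' := by rintro rfl; exact hne rfl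
        rcases hx with hxU | hxabs
        · rcases hy with hyU | hyabs
          · have := hAsep k U hU U' hU' hUU' x hxU y hyU
            linarith
          · rcases (hmemAbs k U' y).1 hyabs with ⟨V', ⟨hV'k, v', hv', u', hu', hv'u'⟩, hyV'⟩
            have hA := hAsep k U hU U' hU' hUU' x hxU u' hu'
            have hd1 := dist_triangle x y v'
            have hd1' := dist_triangle x v' u'
            have hd2 := hBdiam k V' hV'k y hyV' v' hv'
            have hd3 : dist y v' = dist v' y := dist_comm _ _
            linarith
        · rcases (hmemAbs k U x).1 hxabs with ⟨V, ⟨hVk, v, hv, u, hu, hvu⟩, hxV⟩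
          rcases hy with hyU | hyabs
          · have hA := hAsep k U hU U' hU' hUU' u hu y hyU
            have hd1 := dist_triangle u v y
            have hd2 := dist_triangle v x y
            have hd3 := hBdiam k V hVk v hv x hxV
            have hc1 : dist u v = dist v u := dist_comm _ _
            linarith
          · rcases (hmemAbs k U' y).1 hyabs with ⟨V', ⟨hV'k, v', hv', u', hu', hv'u'⟩, hyV'⟩
            by_cases hVV' : V = V'
            · exfalso
              subst hVV'
              have hA := hAsep k U hU U' hU' hUU' u hu u' hu'
              have hd1 := dist_triangle u v u'
              have hd2 := dist_triangle v v' u'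
              have hd3 := hBdiam k V hVk v hv v' hv'
              have hc1 : dist u v = dist v u := dist_comm _ _
              linarith
            · have := hBsep k V hVk V' hV'k hVV' x hxV y hyV'
              linarith
      · rcases hx with hxU | hxabs
        · have := hfar' U hU y hy x hxU
          have hc1 : dist y x = dist x y := dist_comm _ _
          linarith
        · rcases (hmemAbs k U x).1 hxabs with ⟨V, ⟨hVk, v, hv, u, hu, hvu⟩, hxV⟩
          have hVW'ne : V ≠ W' := by
            rintro rfl
            have := hfar' U hU v hv u hu
            linarith
          have := hBsep k V hVk W' hVW' hVW'ne x hxV y hy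
          linarith
    · rcases hW' with ⟨U', hU', rfl⟩ | ⟨hVW', hfar'⟩
      · rcases hy with hyU | hyabs
        · have := hfar U' hU' x hx y hyU
          linarith
        · rcases (hmemAbs k U' y).1 hyabs with ⟨V', ⟨hV'k, v', hv', u', hu', hv'u'⟩, hyV'⟩
          have hVW'ne : W ≠ V' := by
            rintro rfl
            have := hfar U' hU' v' hv' u' hu'
            linarith
          have := hBsep k W hVW V' hV'k hVW'ne x hx y hyV'
          linarith
      · have := hBsep k W hVW W' hVW' hne x hx y hy
        linarith

lemma fine_step {X : Type*} [MetricSpace X] {K : Set X} {n : ℕ}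
    (𝒢 : Set (Set X)) (σ rad τ fsep psep : ℝ) (hσrad : σ < rad)
    (hGK : ∀ Bp ∈ 𝒢, Bp ⊆ K)
    (hGdiam : ∀ Bp ∈ 𝒢, ∀ x ∈ Bp, ∀ y ∈ Bp, dist x y ≤ σ)
    (hGsep : ∀ Bp ∈ 𝒢, ∀ Bp' ∈ 𝒢, Bp ≠ Bp' → ∀ x ∈ Bp, ∀ y ∈ Bp', psep ≤ dist x y)
    (hfine : ∀ x ∈ K, ∃ 𝒱 : Fin (n+1) → Set (Set X),
      (∀ p ∈ Metric.ball x rad, ∃ k, ∃ V ∈ 𝒱 k, p ∈ V) ∧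
      (∀ k, ∀ V ∈ 𝒱 k, ∀ u ∈ V, ∀ v ∈ V, dist u v ≤ τ) ∧
      (∀ k, ∀ V ∈ 𝒱 k, ∀ V' ∈ 𝒱 k, V ≠ V' → ∀ u ∈ V, ∀ v ∈ V', fsep ≤ dist u v)) :
    ∃ 𝒟 : Fin (n+1) → Set (Set X),
      (∀ k, ∀ W ∈ 𝒟 k, ∃ Bp ∈ 𝒢, W ⊆ Bp) ∧
      (∀ p ∈ ⋃₀ 𝒢, ∃ k, ∃ W ∈ 𝒟 k, p ∈ W) ∧
      (∀ k, ∀ W ∈ 𝒟 k, ∀ x ∈ W, ∀ y ∈ W, dist x y ≤ τ) ∧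
      (∀ k, ∀ W ∈ 𝒟 k, ∀ W' ∈ 𝒟 k, W ≠ W' → ∀ x ∈ W, ∀ y ∈ W',
        min fsep psep ≤ dist x y) := by
  classical
  choose! 𝒱 hcov hdiam hsep using hfine
  refine ⟨fun k => {W | ∃ Bp, ∃ _hB : Bp ∈ 𝒢, ∃ hne : Bp.Nonempty,
    ∃ V ∈ 𝒱 hne.choose k, W = V ∩ Bp}, ?_, ?_, ?_, ?_⟩
  · rintro k W ⟨Bp, hB, hne, V, hV, rfl⟩
    exact ⟨Bp, hB, inter_subset_right⟩
  · rintro p ⟨Bp, hB, hp⟩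
    have hne : Bp.Nonempty := ⟨p, hp⟩
    have hx : hne.choose ∈ Bp := hne.choose_spec
    have hxK : hne.choose ∈ K := hGK Bp hB hx
    have hball : p ∈ Metric.ball hne.choose rad := by
      have := hGdiam Bp hB p hp hne.choose hx
      exact mem_ball.mpr (lt_of_le_of_lt this hσrad)
    obtain ⟨k, V, hV, hpV⟩ := hcov hne.choose hxK p hball
    exact ⟨k, V ∩ Bp, ⟨Bp, hB, hne, V, hV, rfl⟩, hpV, hp⟩
  · rintro k W ⟨Bp, hB, hne, V, hV, rfl⟩ x hx y hy
    exact hdiam hne.choose (hGK Bp hB hne.choose_spec) k V hV x hx.1 y hy.1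
  · rintro k W ⟨Bp, hB, hne, V, hV, rfl⟩ W' ⟨Bp', hB', hne', V', hV', rfl⟩ hne2 x hx y hy
    by_cases hBB' : Bp = Bp'
    · subst hBB'
      have hV'' : V' ∈ 𝒱 hne.choose k := hV'
      have hVV' : V ≠ V' := by rintro rfl; exact hne2 rfl
      have := hsep hne.choose (hGK Bp hB hne.choose_spec) k V hV V' hV'' hVV' x hx.1 y hy.1
      exact le_trans (min_le_left _ _) this
    · have := hGsep Bp hB Bp' hB' hBB' x hx.2 y hy.2
      exact le_trans (min_le_right _ _) this

set_option maxHeartbeats 2000000 in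
/-- For every choice of constants `n̄, n ∈ ℕ`, `s̄, s₀ ∈ (0,∞]`,
`a, b > 0` and `c, c̄ ∈ (0,1)` there is `ε ∈ (0,1/8)` such that: if `K ⊆ X` satisfies
`dim_N(K,c̄,s) ≤ n̄` for all `0 < s ≤ s̄`, and there is `r_ε > 0` such that
`dim_N(B_X(x,r/2), (cas − bε)/(as + bε), r(as + bε)) ≤ n` for all `x ∈ K`,
`r ∈ (0,r_ε)` and `s ∈ (0,s₀)`, then `K` has linearly controlled dimension at most `n`. -/
theorem lc_dim_final_conclusion (nbar n : ℕ) (sbar s₀ : ℝ≥0∞) (a b c cbar : ℝ)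
    (hsbar : 0 < sbar) (hs₀ : 0 < s₀) (ha : 0 < a) (hb : 0 < b)
    (hc : c ∈ Set.Ioo (0:ℝ) 1) (hcbar : cbar ∈ Set.Ioo (0:ℝ) 1) :
    ∃ ε : ℝ, ε ∈ Set.Ioo (0:ℝ) (1/8) ∧
      ∀ (X : Type u) [MetricSpace X] (K : Set X),
        (∀ s : ℝ, 0 < s → ENNReal.ofReal s ≤ sbar →
          dimNle (fun p q : X => dist p q) K cbar s nbar) →
        (∃ rε : ℝ, 0 < rε ∧ ∀ x ∈ K, ∀ r : ℝ, 0 < r → r < rε →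
          ∀ s : ℝ, 0 < s → ENNReal.ofReal s < s₀ →
            dimNle (fun p q : X => dist p q) (Metric.ball x (r / 2))
              ((c * a * s - b * ε) / (a * s + b * ε)) (r * (a * s + b * ε)) n) →
        ∃ c' t₀ : ℝ, 0 < c' ∧ 0 < t₀ ∧ ∀ t : ℝ, 0 < t → t < t₀ →
          dimNle (fun p q : X => dist p q) K c' t n := by
  classical
  obtain ⟨hc0, hc1⟩ := hc
  obtain ⟨hcbar0, hcbar1⟩ := hcbar
  set s1 : ℝ := if s₀ = ⊤ then 1 else s₀.toReal / 2 with hs1def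
  clear_value s1
  have hs1pos : 0 < s1 := by
    rw [hs1def]; split
    · norm_num
    · next h => have := ENNReal.toReal_pos (ne_of_gt hs₀) h; linarith
  have hs1lt : ENNReal.ofReal s1 < s₀ := by
    rw [hs1def]; split
    · next h => rw [h]; exact ENNReal.ofReal_lt_top
    · next h =>
        have ht : 0 < s₀.toReal := ENNReal.toReal_pos (ne_of_gt hs₀) h
        calc ENNReal.ofReal (s₀.toReal/2) < ENNReal.ofReal s₀.toReal := by
              rw [ENNReal.ofReal_lt_ofReal_iff ht]; linarith
          _ = s₀ := ENNReal.ofReal_toReal h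
  set P : ℝ := (c/12)^(nbar+1) with hPdef
  clear_value P
  have hPpos : 0 < P := by rw [hPdef]; positivity
  set ss : ℝ := min s1 (cbar * P / (100*a)) with hssdef
  clear_value ss
  have hsspos : 0 < ss := by rw [hssdef]; exact lt_min hs1pos (by positivity)
  have hsslt : ENNReal.ofReal ss < s₀ :=
    lt_of_le_of_lt (ENNReal.ofReal_le_ofReal (by rw [hssdef]; exact min_le_left _ _)) hs1lt
  have hass : a * ss ≤ cbar * P / 100 := by
    have h2 : ss ≤ cbar * P/(100*a) := by rw [hssdef]; exact min_le_right _ _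
    calc a * ss ≤ a * (cbar*P/(100*a)) := by nlinarith
      _ = cbar * P / 100 := by field_simp
  set ε : ℝ := min (1/16) (c*a*ss/(2*b)) with hεdef
  clear_value ε
  have hεpos : 0 < ε := by rw [hεdef]; exact lt_min (by norm_num) (by positivity)
  have hε16 : ε ≤ 1/16 := by rw [hεdef]; exact min_le_left _ _
  have hε8 : ε < 1/8 := lt_of_le_of_lt hε16 (by norm_num)
  have hbε : b * ε ≤ c*a*ss/2 := by
    have h2 : ε ≤ c*a*ss/(2*b) := by rw [hεdef]; exact min_le_right _ _
    calc b*ε ≤ b*(c*a*ss/(2*b)) := by nlinarith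
      _ = c*a*ss/2 := by field_simp
  set κ : ℝ := a*ss + b*ε with hκdef
  clear_value κ
  have hκpos : 0 < κ := by rw [hκdef]; positivity
  have hX : 0 < a * ss := by positivity
  have hcX : c * (a * ss) ≤ a * ss := mul_le_of_le_one_left hX.le hc1.le
  have hκub : κ ≤ (3/2) * (a*ss) := by rw [hκdef]; linarith
  have hκlb : a * ss ≤ κ := by rw [hκdef]; nlinarith
  set lam : ℝ := c*a*ss/2 with hlamdef
  clear_value lam
  have hlampos : 0 < lam := by rw [hlamdef]; positivity
  have hlamle : lam ≤ c*a*ss - b*ε := by rw [hlamdef]; linarith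
  have hbεlam : b * ε ≤ lam := by rw [hlamdef]; linarith
  set q : ℝ := lam / (3*κ) with hqdef
  clear_value q
  have hqpos : 0 < q := by rw [hqdef]; positivity
  have hq3 : 3*q*κ = lam := by rw [hqdef]; field_simp
  have hlamass : lam = c*(a*ss)/2 := by rw [hlamdef]; ring
  have hqge : c/12 ≤ q := by
    have h1 : 3*q*κ ≤ 3*q*((3/2)*(a*ss)) :=
      mul_le_mul_of_nonneg_left hκub (by positivity)
    have h2 : c * (a*ss) ≤ 9*q * (a*ss) := by nlinarith
    have h3 : c ≤ 9*q := (mul_le_mul_iff_of_pos_right hX).mp h2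
    linarith
  have hqle : q ≤ c/6 := by
    have h1 : 3*q*(a*ss) ≤ 3*q*κ :=
      mul_le_mul_of_nonneg_left hκlb (by positivity)
    have h2 : 6*q * (a*ss) ≤ c * (a*ss) := by nlinarith
    have h3 : 6*q ≤ c := (mul_le_mul_iff_of_pos_right hX).mp h2
    linarith
  have hq1 : q ≤ 1 := by linarith
  have hq4 : 4*q ≤ 1 := by linarith
  have hlamκ : lam ≤ κ/2 := by
    have : lam = c*(a*ss)/2 := by rw [hlamdef]; ring
    linarith
  have h4lam : 4*lam ≤ cbar * q^nbar := by
    have e0 : c*(a*ss) ≤ c*(cbar*P/100) := mul_le_mul_of_nonneg_left hass hc0.le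
    have e0' : 4*lam = 2*(c*(a*ss)) := by rw [hlamdef]; ring
    have e1 : 4*lam ≤ 2*(c*(cbar*P/100)) := by linarith
    have e2 : 2*(c*(cbar*P/100)) ≤ cbar*P := by nlinarith [mul_pos hcbar0 hPpos]
    have e3 : P ≤ q^(nbar+1) := by
      rw [hPdef]; exact pow_le_pow_left₀ (by positivity) hqge _
    have e4 : q^(nbar+1) ≤ q^nbar := by
      rw [pow_succ]
      exact mul_le_of_le_one_right (pow_nonneg hqpos.le nbar) hq1
    have e5 : cbar*P ≤ cbar*q^nbar := mul_le_mul_of_nonneg_left (e3.trans e4) hcbar0.le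
    linarith
  refine ⟨ε, ⟨hεpos, hε8⟩, ?_⟩
  intro X _inst K H1 H2
  obtain ⟨rε, hrεpos, H2⟩ := H2
  set S1 : ℝ := if sbar = ⊤ then 1 else sbar.toReal with hS1def
  clear_value S1
  have hS1pos : 0 < S1 := by
    rw [hS1def]; split
    · norm_num
    · next h => exact ENNReal.toReal_pos (ne_of_gt hsbar) h
  have hS1le : ENNReal.ofReal S1 ≤ sbar := by
    rw [hS1def]; split
    · next h => rw [h]; exact le_top
    · next h => rw [ENNReal.ofReal_toReal h]
  refine ⟨q^(nbar+1), min (3*κ*rε) (12*κ*S1), by positivity,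
    lt_min (by positivity) (by positivity), ?_⟩
  intro t ht htlt
  have ht1 : t < 3*κ*rε := lt_of_lt_of_le htlt (min_le_left _ _)
  have ht2 : t < 12*κ*S1 := lt_of_lt_of_le htlt (min_le_right _ _)
  set rb : ℝ := t/(3*κ) with hrbdef
  clear_value rb
  have hrbpos : 0 < rb := by rw [hrbdef]; positivity
  set r : ℕ → ℝ := fun m => q^m * rb with hrdef
  clear_value r
  have hrval : ∀ m, r m = q^m * rb := fun m => by rw [hrdef]
  have hrpos : ∀ m, 0 < r m := fun m => by rw [hrval]; positivity
  have hrle : ∀ m, r m ≤ rb := by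
    intro m
    rw [hrval]
    exact mul_le_of_le_one_left hrbpos.le (pow_le_one₀ hqpos.le hq1)
  have hrmono : ∀ m, m ≤ nbar → r nbar ≤ r m := by
    intro m hm
    rw [hrval, hrval]
    exact mul_le_mul_of_nonneg_right (pow_le_pow_of_le_one hqpos.le hq1 hm) hrbpos.le
  have hrrε : ∀ m, r m < rε := by
    intro m
    have h1 : rb < rε := by
      rw [hrbdef, div_lt_iff₀ (by positivity : (0:ℝ) < 3*κ)]; linarith
    exact lt_of_le_of_lt (hrle m) h1
  set σ : ℝ := r nbar / 4 with hσdef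
  clear_value σ
  have hσpos : 0 < σ := by rw [hσdef]; linarith [hrpos nbar]
  have hσr : ∀ m, m ≤ nbar → σ < r m / 2 := by
    intro m hm
    have h1 := hrmono m hm
    have h2 := hrpos nbar
    rw [hσdef]; linarith
  have hσS1 : σ < S1 := by
    have h1 : σ ≤ rb/4 := by rw [hσdef]; linarith [hrle nbar]
    have h2 : rb/4 = t/(12*κ) := by rw [hrbdef]; ring
    have h3 : t/(12*κ) < S1 := by
      rw [div_lt_iff₀ (by positivity : (0:ℝ) < 12*κ)]; linarith
    linarith
  have hσsbar : ENNReal.ofReal σ ≤ sbar :=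
    le_trans (ENNReal.ofReal_le_ofReal hσS1.le) hS1le
  have hH1 := H1 σ hσpos hσsbar
  simp only [dimNle] at hH1
  obtain ⟨𝒰, hUK, hUcov, hUdiam, hUsep⟩ := hH1
  have hcbarσ : lam * rb ≤ cbar * σ := by
    have hσval : σ = q^nbar * rb / 4 := by rw [hσdef, hrval]
    rw [hσval]
    linarith only [mul_nonneg (sub_nonneg.mpr h4lam) hrbpos.le]
  have hκ0 : a*ss + b*ε ≠ 0 := by rw [← hκdef]; exact hκpos.ne'
  have hfine : ∀ m, ∀ x ∈ K, ∃ 𝒱 : Fin (n+1) → Set (Set X),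
      (∀ p ∈ Metric.ball x (r m / 2), ∃ k, ∃ V ∈ 𝒱 k, p ∈ V) ∧
      (∀ k, ∀ V ∈ 𝒱 k, ∀ u ∈ V, ∀ v ∈ V, dist u v ≤ κ * r m) ∧
      (∀ k, ∀ V ∈ 𝒱 k, ∀ V' ∈ 𝒱 k, V ≠ V' → ∀ u ∈ V, ∀ v ∈ V', lam * r m ≤ dist u v) := by
    intro m x hx
    have h := H2 x hx (r m) (hrpos m) (hrrε m) ss hsspos hsslt
    simp only [dimNle] at h
    obtain ⟨𝒱, hsub, hcovB, hdiamB, hsepB⟩ := h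
    refine ⟨𝒱, hcovB, ?_, ?_⟩
    · intro k V hV u hu v hv
      have h1 := hdiamB k V hV u hu v hv
      have h2 : r m * (a*ss + b*ε) = κ * r m := by rw [hκdef]; ring
      linarith only [h1, h2]
    · intro k V hV V' hV' hVV' u hu v hv
      have h1 := hsepB k V hV V' hV' hVV' u hu v hv
      have h2 : (c*a*ss - b*ε)/(a*ss+b*ε) * (r m * (a*ss+b*ε)) = (c*a*ss - b*ε) * r m := by
        field_simp
      have h3 : lam * r m ≤ (c*a*ss - b*ε) * r m :=
        mul_le_mul_of_nonneg_right hlamle (hrpos m).le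
      linarith only [h1, h2, h3]
  have hr0 : r 0 = rb := by rw [hrval]; simp
  have main : ∀ m : ℕ, m ≤ nbar → ∃ 𝒞 : Fin (n+1) → Set (Set X),
      (∀ k, ∀ W ∈ 𝒞 k, W ⊆ K) ∧
      (∀ p : X, (∃ j : Fin (nbar+1), (j:ℕ) ≤ m ∧ ∃ Bp ∈ 𝒰 j, p ∈ Bp) →
        ∃ k, ∃ W ∈ 𝒞 k, p ∈ W) ∧
      (∀ k, ∀ W ∈ 𝒞 k, ∀ x ∈ W, ∀ y ∈ W, dist x y ≤ κ * rb * (2 - q^m)) ∧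
      (∀ k, ∀ W ∈ 𝒞 k, ∀ W' ∈ 𝒞 k, W ≠ W' → ∀ x ∈ W, ∀ y ∈ W', lam * r m ≤ dist x y) := by
    intro m
    induction m with
    | zero =>
      intro _
      obtain ⟨𝒟, hDsub, hDcov, hDdiam, hDsep⟩ :=
        fine_step (𝒰 0) σ (r 0 / 2) (κ * r 0) (lam * r 0) (cbar * σ)
          (hσr 0 (Nat.zero_le _)) (hUK 0) (hUdiam 0) (hUsep 0) (hfine 0)
      refine ⟨𝒟, ?_, ?_, ?_, ?_⟩
      · intro k W hW
        obtain ⟨Bp, hBp, hsub⟩ := hDsub k W hW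
        exact hsub.trans (hUK 0 Bp hBp)
      · rintro p ⟨j, hj, Bp, hBp, hpBp⟩
        have hj0 : j = 0 := by
          apply Fin.ext
          simpa using Nat.le_zero.mp hj
        rw [hj0] at hBp
        exact hDcov p ⟨Bp, hBp, hpBp⟩
      · intro k W hW x hx y hy
        have h1 := hDdiam k W hW x hx y hy
        rw [hr0] at h1
        have h3 : (0:ℝ) ≤ κ * rb := (mul_pos hκpos hrbpos).le
        simp only [pow_zero]
        linarith only [h1, h3]
      · intro k W hW W' hW' hWW' x hx y hy
        refine le_trans (le_min le_rfl ?_) (hDsep k W hW W' hW' hWW' x hx y hy)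
        rw [hr0]; exact hcbarσ
    | succ m ih =>
      intro hm1
      have hm : m ≤ nbar := Nat.le_of_succ_le hm1
      obtain ⟨𝒞, hCK, hCcov, hCdiam, hCsep⟩ := ih hm
      have hlt : m+1 < nbar+1 := by omega
      obtain ⟨𝒟, hDsub, hDcov, hDdiam, hDsep⟩ :=
        fine_step (𝒰 ⟨m+1, hlt⟩) σ (r (m+1) / 2) (κ * r (m+1)) (lam * r (m+1)) (cbar * σ)
          (hσr (m+1) hm1) (hUK ⟨m+1, hlt⟩) (hUdiam ⟨m+1, hlt⟩) (hUsep ⟨m+1, hlt⟩)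
          (hfine (m+1))
      have hDsep' : ∀ k, ∀ W ∈ 𝒟 k, ∀ W' ∈ 𝒟 k, W ≠ W' →
          ∀ x ∈ W, ∀ y ∈ W', lam * r (m+1) ≤ dist x y := by
        intro k W hW W' hW' hne2 x hx y hy
        refine le_trans (le_min le_rfl ?_) (hDsep k W hW W' hW' hne2 x hx y hy)
        have hh : lam * r (m+1) ≤ lam * rb :=
          mul_le_mul_of_nonneg_left (hrle (m+1)) hlampos.le
        linarith only [hh, hcbarσ]
      have hDK : ∀ k, ∀ W ∈ 𝒟 k, W ⊆ K := by
        intro k W hW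
        obtain ⟨Bp, hBp, hsub⟩ := hDsub k W hW
        exact hsub.trans (hUK ⟨m+1, hlt⟩ Bp hBp)
      have hlamr : lam * r m = 3*(κ * r (m+1)) := by
        rw [hrval, hrval, pow_succ, ← hq3]; ring
      have hrsuccpos := hrpos (m+1)
      have hδβ : (0:ℝ) ≤ κ * r (m+1) := mul_nonneg hκpos.le hrsuccpos.le
      have hpm1 : q^m ≤ 1 := pow_le_one₀ hqpos.le hq1
      have hpm0 : (0:ℝ) ≤ q^m := pow_nonneg hqpos.le m
      have hκrb : (0:ℝ) < κ * rb := mul_pos hκpos hrbpos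
      have hlr : (0:ℝ) ≤ (κ/2 - lam) * r (m+1) :=
        mul_nonneg (by linarith) hrsuccpos.le
      obtain ⟨𝒞', h1, h2, h3, h4⟩ := absorb_lemma (K := K)
          (A := {p | ∃ j : Fin (nbar+1), (j:ℕ) ≤ m ∧ ∃ Bp ∈ 𝒰 j, p ∈ Bp})
          (B := ⋃₀ 𝒰 ⟨m+1, hlt⟩) 𝒞 𝒟
          (κ*rb*(2-q^m)) (κ * r (m+1)) (lam * r m) (lam * r (m+1))
          (κ * r (m+1)/2) (lam * r (m+1))
          hCK hDK (fun p hp => hCcov p hp) hDcov hCdiam hDdiam hCsep hDsep'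
          (by linarith only [hlamr, hδβ]) (by linarith only [hlr]) le_rfl
          (by linarith only [hlamr, hlr, hδβ])
          (mul_nonneg hκrb.le (by linarith only [hpm1] : (0:ℝ) ≤ 2 - q^m))
          hδβ (by linarith only [hδβ])
      refine ⟨𝒞', h1, ?_, ?_, ?_⟩
      · rintro p ⟨j, hj, Bp, hBp, hpBp⟩
        by_cases hjm : (j:ℕ) ≤ m
        · exact h2 p (Set.mem_union_left _ ⟨j, hjm, Bp, hBp, hpBp⟩)
        · have hjval : (j:ℕ) = m+1 := by omega
          have hjeq : j = ⟨m+1, hlt⟩ := Fin.ext hjval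
          rw [hjeq] at hBp
          exact h2 p (Set.mem_union_right _ ⟨Bp, hBp, hpBp⟩)
      · intro k W hW x hx y hy
        have hd := h3 k W hW x hx y hy
        have hrsucc : r (m+1) = q^m * q * rb := by rw [hrval, pow_succ]
        have hfact : (0:ℝ) ≤ κ*rb*q^m*(1-4*q) :=
          mul_nonneg (mul_nonneg (mul_nonneg hκpos.le hrbpos.le) hpm0) (by linarith)
        have hpsucc : q^(m+1) = q^m * q := pow_succ q m
        rw [hpsucc]
        rw [hrsucc] at hd
        linarith only [hd, hfact]
      · exact h4
  obtain ⟨𝒞, hCK, hCcov, hCdiam, hCsep⟩ := main nbar le_rfl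
  simp only [dimNle]
  refine ⟨𝒞, hCK, ?_, ?_, ?_⟩
  · intro p hp
    obtain ⟨j, Bp, hBp, hpBp⟩ := hUcov p hp
    exact hCcov p ⟨j, Nat.lt_succ_iff.mp j.isLt, Bp, hBp, hpBp⟩
  · intro k W hW x hx y hy
    have h1 := hCdiam k W hW x hx y hy
    have hκrb : κ * rb = t/3 := by rw [hrbdef]; field_simp
    have hpm0 : (0:ℝ) ≤ q^nbar := pow_nonneg hqpos.le nbar
    rw [hκrb] at h1
    linarith only [h1, mul_nonneg ht.le hpm0, ht.le]
  · intro k W hW W' hW' hne x hx y hy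
    have h1 := hCsep k W hW W' hW' hne x hx y hy
    have h2 : lam * r nbar = q^(nbar+1) * t := by
      rw [hrval, hrbdef, ← hq3, pow_succ]
      field_simp
    linarith only [h1, h2]
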